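/- Let a, b, c be real quaternions and set d' := b^2 + (star a)·a + b·(a + star a), where star denotes quaternion conjugation. If d' ≠ 0, then x := ((star a)·c + c·b)·d'⁻¹ satisfies the Sylvester equation a·x + x·b = c. -/
import Mathlib

theorem quaternion_sylvester_right_solution (a b c : Quaternion ℝ)
    (hd : b ^ 2 + star a * a + b * (a + star a) ≠ 0) :
    a * ((star a * c + c * b) * (b ^ 2 + star a * a + b * (a + star a))⁻¹) +
      ((star a * c + c * b) * (b ^ 2 + star a * a + b * (a + star a))⁻¹) * b = c := by
  set d := b ^ 2 + star a * a + b * (a + star a) with hdef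
  have hsa : star a * a = ((Quaternion.normSq a : ℝ) : Quaternion ℝ) :=
    Quaternion.star_mul_self a
  have hsa' : a * star a = ((Quaternion.normSq a : ℝ) : Quaternion ℝ) :=
    Quaternion.self_mul_star a
  have hts : a + star a = ((2 * a.re : ℝ) : Quaternion ℝ) := Quaternion.self_add_star' a
  have hcb : Commute b d := by
    rw [hdef, hsa, hts]
    exact (((Commute.pow_self b 2).symm.add_right
      (Quaternion.coe_commute _ b).symm).add_right
      (Commute.mul_right (Commute.refl b) (Quaternion.coe_commute _ b).symm))
  have hcbi : Commute b d⁻¹ := hcb.inv_right₀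
  have key : a * (star a * c + c * b) + (star a * c + c * b) * b = c * d := by
    have h1 : a * (star a * c) = c * ((Quaternion.normSq a : ℝ) : Quaternion ℝ) := by
      rw [← mul_assoc, hsa', Quaternion.coe_commute]
    have h2 : a * (c * b) + star a * c * b = c * (b * ((2 * a.re : ℝ) : Quaternion ℝ)) := by
      rw [← mul_assoc, ← add_mul, ← add_mul, hts, Quaternion.coe_commute,
        mul_assoc, (Quaternion.coe_commute (2 * a.re) b).eq]
    have expand : a * (star a * c + c * b) + (star a * c + c * b) * b
        = a * (star a * c) + (a * (c * b) + star a * c * b) + c * b * b := by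
      noncomm_ring
    rw [expand, h1, h2, hdef, hsa, hts]
    noncomm_ring
  have hx : (star a * c + c * b) * d⁻¹ * b = (star a * c + c * b) * b * d⁻¹ := by
    rw [mul_assoc, hcbi.symm.eq, ← mul_assoc]
  rw [hx, ← mul_assoc, ← add_mul, key, mul_assoc, mul_inv_cancel₀ hd, mul_one]
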